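/- Let p ∈ (0,1), n ≥ 1, x ∈ ℤⁿ, and let x̃_i = x_i + η_i where η_1,…,η_n are i.i.d. discrete Laplace with parameter p. Define coefficients α_0 = 1 + 2p/(1-p)² and α_{±1} = -p/(1-p)². For f : ℤⁿ → ℝ with E[|f(x̃)|] finite, the estimator g(y) = Σ_{ξ ∈ {-1,0,1}ⁿ} f(y + ξ)·Π_{j=1}^n α_{ξ_j} satisfies E[g(x̃)] = f(x). -/

import Mathlib

open scoped BigOperators

lemma uni_key (p : ℝ) (hp0 : 0 < p) (hp1 : p < 1) (α : ℤ → ℝ)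
    (hα : ∀ ξ : ℤ, α ξ = if ξ = 0 then 1 + 2 * p / (1 - p) ^ 2 else -p / (1 - p) ^ 2)
    (m : ℤ) :
    ∑ t ∈ ({-1, 0, 1} : Finset ℤ), α t * ((1 - p) / (1 + p) * p ^ |m - t|) =
      if m = 0 then 1 else 0 := by
  have hpe : p ≠ 0 := hp0.ne'
  have h1m : (1 - p) ≠ 0 := by linarith
  have h1p : (1 + p) ≠ 0 := by linarith
  have hs : ∑ t ∈ ({-1, 0, 1} : Finset ℤ), α t * ((1 - p) / (1 + p) * p ^ |m - t|)
      = α (-1) * ((1 - p) / (1 + p) * p ^ |m + 1|)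
        + α 0 * ((1 - p) / (1 + p) * p ^ |m|)
        + α 1 * ((1 - p) / (1 + p) * p ^ |m - 1|) := by
    rw [show ({-1, 0, 1} : Finset ℤ) = insert (-1) (insert 0 {1}) from rfl,
      Finset.sum_insert (by decide), Finset.sum_insert (by decide), Finset.sum_singleton]
    ring_nf
  rw [hs, hα (-1), hα 0, hα 1]
  norm_num
  rcases lt_trichotomy m 0 with hm | hm | hm
  · have e1 : |m + 1| = -m - 1 := by rw [abs_of_nonpos (by omega)]; ring
    have e2 : |m| = -m := abs_of_neg hm
    have e3 : |m - 1| = -m + 1 := by rw [abs_of_neg (by omega)]; ring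
    rw [e1, e2, e3, if_neg hm.ne, zpow_sub₀ hpe, zpow_add₀ hpe, zpow_one]
    have hq : p ^ (-m) ≠ 0 := zpow_ne_zero _ hpe
    field_simp
    ring
  · subst hm; norm_num
    field_simp
    ring
  · have e1 : |m + 1| = m + 1 := abs_of_pos (by omega)
    have e2 : |m| = m := abs_of_pos hm
    have e3 : |m - 1| = m - 1 := abs_of_nonneg (by omega)
    rw [e1, e2, e3, if_neg hm.ne', zpow_sub₀ hpe, zpow_add₀ hpe, zpow_one]
    have hq : p ^ m ≠ 0 := zpow_ne_zero _ hpe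
    field_simp
    ring

/-- Debiasing the multivariate discrete Laplace mechanism. -/
theorem discrete_laplace_unbiased_multivariate
    (p : ℝ) (hp0 : 0 < p) (hp1 : p < 1) (n : ℕ) (hn : 1 ≤ n)
    (x : Fin n → ℤ) (f : (Fin n → ℤ) → ℝ)
    (α : ℤ → ℝ)
    (hα : ∀ ξ : ℤ, α ξ = if ξ = 0 then 1 + 2 * p / (1 - p) ^ 2 else -p / (1 - p) ^ 2)
    (hsum : Summable fun η : Fin n → ℤ =>
      (∏ j, (1 - p) / (1 + p) * p ^ |η j|) * |f (x + η)|) :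
    (∑' η : Fin n → ℤ, (∏ j, (1 - p) / (1 + p) * p ^ |η j|) *
        (∑ ξ ∈ Fintype.piFinset (fun _ : Fin n => ({-1, 0, 1} : Finset ℤ)),
          f (x + η + ξ) * ∏ j, α (ξ j))) = f x := by
  classical
  set c : ℝ := (1 - p) / (1 + p) with hc
  set S : Finset (Fin n → ℤ) := Fintype.piFinset (fun _ : Fin n => ({-1, 0, 1} : Finset ℤ))
    with hS
  have hcpos : 0 < c := div_pos (by linarith) (by linarith)
  have hWpos : ∀ η : Fin n → ℤ, 0 < ∏ j, c * p ^ |η j| := fun η =>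
    Finset.prod_pos fun j _ => mul_pos hcpos (zpow_pos hp0 _)
  -- coordinates of ξ ∈ S are in {-1,0,1}
  have hmem : ∀ ξ ∈ S, ∀ j, ξ j = -1 ∨ ξ j = 0 ∨ ξ j = 1 := by
    intro ξ hξ j
    have := (Fintype.mem_piFinset.mp hξ) j
    simpa using this
  -- the weight bound
  have hWle : ∀ ξ ∈ S, ∀ η : Fin n → ℤ,
      (∏ j, c * p ^ |η j|) ≤ p⁻¹ ^ n * ∏ j, c * p ^ |(η + ξ) j| := by
    intro ξ hξ η
    have : ∏ j : Fin n, p⁻¹ * (c * p ^ |(η + ξ) j|)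
        = p⁻¹ ^ n * ∏ j : Fin n, c * p ^ |(η + ξ) j| := by
      rw [Finset.prod_mul_distrib, Finset.prod_const, Finset.card_univ, Fintype.card_fin]
    rw [← this]
    apply Finset.prod_le_prod
    · intro j _; positivity
    · intro j _
      have hb : |η j + ξ j| - 1 ≤ |η j| := by
        have h1 : |ξ j| ≤ 1 := by rcases hmem ξ hξ j with h | h | h <;> simp [h]
        have h2 := abs_add_le (η j) (ξ j)
        omega
      have : p⁻¹ * (c * p ^ |(η + ξ) j|) = c * p ^ (|η j + ξ j| - 1) := by
        rw [zpow_sub₀ hp0.ne', zpow_one, Pi.add_apply]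
        field_simp
      rw [this]
      exact mul_le_mul_of_nonneg_left
        (zpow_le_zpow_right_of_le_one₀ hp0 hp1.le hb) hcpos.le
  -- summability for each shifted term
  have hsum' : ∀ ξ ∈ S, Summable fun η : Fin n → ℤ =>
      (∏ j, c * p ^ |η j|) * |f (x + η + ξ)| := by
    intro ξ hξ
    have h1 : Summable fun η : Fin n → ℤ => (∏ j, c * p ^ |(η + ξ) j|) * |f (x + η + ξ)| := by
      have := hsum.comp_injective (add_left_injective ξ)
      simpa [Function.comp_def, add_assoc] using this
    refine Summable.of_nonneg_of_le
      (fun η => mul_nonneg (hWpos η).le (abs_nonneg _)) (fun η => ?_) (h1.mul_left (p⁻¹ ^ n))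
    calc (∏ j, c * p ^ |η j|) * |f (x + η + ξ)|
        ≤ (p⁻¹ ^ n * ∏ j, c * p ^ |(η + ξ) j|) * |f (x + η + ξ)| :=
          mul_le_mul_of_nonneg_right (hWle ξ hξ η) (abs_nonneg _)
      _ = p⁻¹ ^ n * ((∏ j, c * p ^ |(η + ξ) j|) * |f (x + η + ξ)|) := by ring
  have hG : ∀ ξ ∈ S, Summable fun η : Fin n → ℤ =>
      (∏ j, c * p ^ |η j|) * (f (x + η + ξ) * ∏ j, α (ξ j)) := by
    intro ξ hξ
    have h2 : Summable fun η : Fin n → ℤ => (∏ j, c * p ^ |η j|) * f (x + η + ξ) := by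
      refine summable_abs_iff.mp ?_
      have heq : (fun η : Fin n → ℤ => |(∏ j, c * p ^ |η j|) * f (x + η + ξ)|)
          = fun η => (∏ j, c * p ^ |η j|) * |f (x + η + ξ)| := by
        funext η; rw [abs_mul, abs_of_pos (hWpos η)]
      rw [heq]; exact hsum' ξ hξ
    simpa [mul_assoc] using h2.mul_right (∏ j, α (ξ j))
  have hG' : ∀ ξ ∈ S, Summable fun η : Fin n → ℤ =>
      (∏ j, c * p ^ |η j - ξ j|) * (f (x + η) * ∏ j, α (ξ j)) := by
    intro ξ hξ
    have := (hG ξ hξ).comp_injective (Equiv.subRight ξ).injective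
    simpa [Function.comp_def, add_assoc] using this
  calc (∑' η : Fin n → ℤ, (∏ j, c * p ^ |η j|) *
        (∑ ξ ∈ S, f (x + η + ξ) * ∏ j, α (ξ j)))
      = ∑' η : Fin n → ℤ, ∑ ξ ∈ S,
          (∏ j, c * p ^ |η j|) * (f (x + η + ξ) * ∏ j, α (ξ j)) := by
        exact tsum_congr fun η => Finset.mul_sum _ _ _
    _ = ∑ ξ ∈ S, ∑' η : Fin n → ℤ,
          (∏ j, c * p ^ |η j|) * (f (x + η + ξ) * ∏ j, α (ξ j)) := Summable.tsum_finsetSum hG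
    _ = ∑ ξ ∈ S, ∑' η : Fin n → ℤ,
          (∏ j, c * p ^ |η j - ξ j|) * (f (x + η) * ∏ j, α (ξ j)) := by
        refine Finset.sum_congr rfl fun ξ hξ => ?_
        rw [← (Equiv.addRight ξ).tsum_eq
          (fun η => (∏ j, c * p ^ |η j - ξ j|) * (f (x + η) * ∏ j, α (ξ j)))]
        exact tsum_congr fun η => by simp [add_sub_cancel_right, add_assoc]

    _ = ∑' η : Fin n → ℤ, ∑ ξ ∈ S,
          (∏ j, c * p ^ |η j - ξ j|) * (f (x + η) * ∏ j, α (ξ j)) := (Summable.tsum_finsetSum hG').symm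
    _ = ∑' η : Fin n → ℤ, f (x + η) *
          ∏ j, ∑ t ∈ ({-1, 0, 1} : Finset ℤ), α t * (c * p ^ |η j - t|) := by
        refine tsum_congr fun η => ?_
        rw [Finset.prod_univ_sum, Finset.mul_sum]
        refine Finset.sum_congr rfl fun ξ hξ => ?_
        rw [show ∏ i, α (ξ i) * (c * p ^ |η i - ξ i|)
            = (∏ i, α (ξ i)) * ∏ i, c * p ^ |η i - ξ i| from Finset.prod_mul_distrib]
        ring
    _ = ∑' η : Fin n → ℤ, f (x + η) * ∏ j, (if η j = 0 then (1:ℝ) else 0) := by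
        refine tsum_congr fun η => ?_
        congr 1
        exact Finset.prod_congr rfl fun j _ => uni_key p hp0 hp1 α hα (η j)
    _ = ∑' η : Fin n → ℤ, (if η = 0 then f (x + η) else 0) := by
        refine tsum_congr fun η => ?_
        by_cases hη : η = 0
        · subst hη; simp
        · obtain ⟨j, hj⟩ : ∃ j, η j ≠ 0 := by
            by_contra h
            push_neg at h
            exact hη (funext h)
          rw [Finset.prod_eq_zero (Finset.mem_univ j) (by simp [hj])]
          simp [hη]
    _ = f x := by
        rw [tsum_eq_single (0 : Fin n → ℤ) (fun b hb => by simp [hb])]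
        simp
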